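/- For all natural numbers n ≥ 2, the identity ∑_{p=2}^{n} ((2n − p + 1)/(p + 1)) · C(n, p) = 3·2^n − n² − 2n − 3 holds. -/

import Mathlib

theorem sum_identity (n : ℕ) (hn : 2 ≤ n) :
    ∑ p ∈ Finset.Icc 2 n,
      ((2 * (n : ℚ) - (p : ℚ) + 1) / ((p : ℚ) + 1)) * (n.choose p : ℚ) =
    3 * 2 ^ n - (n : ℚ) ^ 2 - 2 * (n : ℚ) - 3 := by
  have hIcc : Finset.Icc 2 n = Finset.Ico 2 (n+1) := by rw [Finset.Ico_add_one_right_eq_Icc]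
  have hstep : ∑ p ∈ Finset.Icc 2 n,
      ((2 * (n : ℚ) - (p : ℚ) + 1) / ((p : ℚ) + 1)) * (n.choose p : ℚ)
      = ∑ p ∈ Finset.Icc 2 n, ((n.choose p : ℚ) + 2 * (n.choose (p+1) : ℚ)) := by
    refine Finset.sum_congr rfl ?_
    intro p hp
    rw [Finset.mem_Icc] at hp
    have hp1 : (p:ℚ) + 1 ≠ 0 := by positivity
    have hkey : (n.choose (p+1) : ℚ) * ((p:ℚ)+1) = (n.choose p : ℚ) * ((n:ℚ) - p) := by
      have := Nat.choose_succ_right_eq n p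
      have hc : ((n.choose (p+1) * (p+1) : ℕ) : ℚ) = ((n.choose p * (n - p) : ℕ) : ℚ) := by
        exact_mod_cast congrArg (Nat.cast : ℕ → ℚ) this
      push_cast [Nat.cast_sub hp.2] at hc
      linarith
    field_simp
    ring_nf
    ring_nf at hkey
    linarith
  rw [hstep, Finset.sum_add_distrib, ← Finset.mul_sum]
  -- total sum of choose in ℚ
  have htot : ∑ p ∈ Finset.range (n+1), (n.choose p : ℚ) = 2^n := by
    have := Nat.sum_range_choose n
    exact_mod_cast congrArg (Nat.cast : ℕ → ℚ) this
  have h1 : ∑ p ∈ Finset.Icc 2 n, (n.choose p : ℚ) = 2^n - 1 - n := by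
    have hsplit := Finset.sum_Ico_consecutive (fun p => (n.choose p : ℚ))
      (by norm_num : (0:ℕ) ≤ 2) (by omega : 2 ≤ n+1)
    rw [← Finset.range_eq_Ico, ← Finset.range_eq_Ico] at hsplit
    have h02 : ∑ p ∈ Finset.range 2, (n.choose p : ℚ) = 1 + n := by
      simp [Finset.sum_range_succ]
    rw [hIcc]
    have := htot
    rw [← hsplit, h02] at this
    linarith
  have h2 : ∑ p ∈ Finset.Icc 2 n, (n.choose (p+1) : ℚ)
      = 2^n - 1 - n - (n.choose 2 : ℚ) := by
    have hshift : ∑ p ∈ Finset.Ico 2 (n+1), (n.choose (p+1) : ℚ)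
        = ∑ q ∈ Finset.Ico 3 (n+2), (n.choose q : ℚ) := by
      rw [← Finset.sum_Ico_add' (fun q => (n.choose q : ℚ)) 2 (n+1) 1]
    have htop : ∑ q ∈ Finset.Ico 3 (n+2), (n.choose q : ℚ)
        = ∑ q ∈ Finset.Ico 3 (n+1), (n.choose q : ℚ) + (n.choose (n+1) : ℚ) := by
      exact Finset.sum_Ico_succ_top (by omega) _
    have hz : (n.choose (n+1) : ℚ) = 0 := by
      rw [Nat.choose_eq_zero_of_lt (by omega)]; norm_num
    have hsplit := Finset.sum_Ico_consecutive (fun p => (n.choose p : ℚ))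
      (by norm_num : (0:ℕ) ≤ 3) (by omega : 3 ≤ n+1)
    rw [← Finset.range_eq_Ico, ← Finset.range_eq_Ico] at hsplit
    have h03 : ∑ p ∈ Finset.range 3, (n.choose p : ℚ) = 1 + n + (n.choose 2 : ℚ) := by
      simp [Finset.sum_range_succ]
    have htot' := htot
    rw [← hsplit, h03] at htot'
    rw [hIcc, hshift, htop, hz]
    linarith
  have hc2 : (n.choose 2 : ℚ) * 2 = (n:ℚ) * ((n:ℚ) - 1) := by
    have h : n.choose 2 * 2 = n * (n-1) := by
      rw [Nat.choose_two_right, Nat.div_mul_cancel]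
      have hd : 2 ∣ (n-1) * ((n-1)+1) := (Nat.even_mul_succ_self (n-1)).two_dvd
      have he : (n-1) * ((n-1)+1) = n * (n-1) := by
        rw [Nat.sub_add_cancel (by omega)]; ring
      rwa [he] at hd
    have hc := congrArg (Nat.cast : ℕ → ℚ) h
    push_cast [Nat.cast_sub (by omega : 1 ≤ n)] at hc
    linarith
  rw [h1, h2]
  ring_nf
  ring_nf at hc2
  linarith
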